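/- arXiv:0806.3201 — 5 statements merged into one kernel-verified Lean document; each statement's English description precedes it below -/
import Mathlib

section
/- An edge e = (v,w) of G belongs to the aggregate backbone H* (i.e., e is essential) if and only if there exist nodes x and y and a minimum-delay directed path from x to y that contains the edge e. -/
/-- A directed path (with at least one edge) from `x` to `y` in the directed graph with
edge relation `E`, represented as the list of its vertices. -/
def IsDipath {V : Type*} (E : V → V → Prop) (x y : V) (p : List V) : Prop :=
  2 ≤ p.length ∧ p.head? = some x ∧ p.getLast? = some y ∧ p.Chain' E

/-- The delay of a directed path: the sum of the delays `δ` of its edges. -/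
noncomputable def pathDelay {V : Type*} (δ : V → V → ℝ) (p : List V) : ℝ :=
  ((p.zip p.tail).map fun q => δ q.1 q.2).sum

/-- `p` is a minimum-delay directed path from `x` to `y`: its delay is at most the delay
of every directed path from `x` to `y`. -/
def IsMinDelayPath {V : Type*} (E : V → V → Prop) (δ : V → V → ℝ) (x y : V)
    (p : List V) : Prop :=
  IsDipath E x y p ∧ ∀ q, IsDipath E x y q → pathDelay δ p ≤ pathDelay δ q

/-- An edge `(v,w)` is essential (i.e. belongs to the aggregate backbone `H*`) if the
single-edge path `[v, w]` is a minimum-delay path from `v` to `w`. -/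
def EssentialEdge {V : Type*} (E : V → V → Prop) (δ : V → V → ℝ) (v w : V) : Prop :=
  E v w ∧ IsMinDelayPath E δ v w [v, w]

lemma pathDelay_cons_cons {V : Type*} (δ : V → V → ℝ) (a b : V) (l : List V) :
    pathDelay δ (a :: b :: l) = δ a b + pathDelay δ (b :: l) := by
  simp [pathDelay]

lemma pathDelay_glue {V : Type*} (δ : V → V → ℝ) (x : V) (b : List V) :
    ∀ a : List V, pathDelay δ (a ++ x :: b) = pathDelay δ (a ++ [x]) + pathDelay δ (x :: b) := by
  intro a
  induction a with
  | nil => simp [pathDelay]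
  | cons c a ih =>
    cases a with
    | nil => simp [pathDelay_cons_cons, pathDelay]
    | cons d a' =>
      simp only [List.cons_append] at *
      rw [pathDelay_cons_cons, pathDelay_cons_cons (l := a' ++ [x]), ih]
      ring

/-- An edge `e = (v,w)` of `G` is essential (belongs to the aggregate backbone `H*`)
if and only if there are nodes `x`, `y` and a minimum-delay directed path from `x` to `y`
containing the edge `e` (i.e. having `v, w` as consecutive vertices). -/
theorem essential_iff_on_min_delay_path {V : Type*} [Fintype V]
    (E : V → V → Prop) (δ : V → V → ℝ)
    (hδ : ∀ a b, E a b → 0 < δ a b) (v w : V) (hvw : E v w) :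
    EssentialEdge E δ v w ↔
      ∃ x y : V, ∃ p : List V, IsMinDelayPath E δ x y p ∧ [v, w] <:+: p := by
  constructor
  · rintro ⟨-, hmin⟩
    exact ⟨v, w, [v, w], hmin, List.infix_refl _⟩
  · rintro ⟨x, y, p, ⟨hp, hpmin⟩, s, t, hst⟩
    refine ⟨hvw, ⟨?_, ?_⟩⟩
    · exact ⟨le_refl _, rfl, rfl, List.isChain_pair.mpr hvw⟩
    · intro q hq
      obtain ⟨hqlen, hqhead, hqlast, hqchain⟩ := hq
      -- q is nonempty, q = v :: m
      have hqne : q ≠ [] := by rintro rfl; simp at hqhead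
      obtain ⟨m, rfl⟩ : ∃ m, q = v :: m := by
        refine ⟨q.tail, ?_⟩
        have h := List.head?_eq_head (l := q) hqne
        rw [h] at hqhead
        have hv := Option.some_inj.mp hqhead
        conv_lhs => rw [← List.cons_head_tail hqne, hv]
      -- q ends with w
      have hqlast' : (v :: m).getLast (by simp) = w := by
        have := List.getLast?_eq_getLast (l := v :: m) (by simp)
        rw [this] at hqlast; exact Option.some_injective _ hqlast
      have hqdec : (v :: m).dropLast ++ [w] = v :: m := by
        conv_rhs => rw [← List.dropLast_append_getLast (l := v :: m) (by simp)]
        rw [hqlast']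
      set q := v :: m with hqdef
      -- p = s ++ v :: w :: t
      have hpdec : p = s ++ v :: w :: t := by rw [← hst]; simp
      -- the replacement path
      set p' := s ++ q ++ t with hp'def
      obtain ⟨hplen, hphead, hplast, hpchain⟩ := hp
      -- p' is a dipath from x to y
      have hp'dipath : IsDipath E x y p' := by
        refine ⟨?_, ?_, ?_, ?_⟩
        · have : 2 ≤ q.length := hqlen
          simp only [hp'def, List.length_append]
          omega
        · rw [← hphead, hpdec, hp'def, List.append_assoc, List.head?_append,
            List.head?_append]
          simp [hqdef]
        · have h1 : q.getLast? = some w := by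
            rw [List.getLast?_eq_getLast (l := q) (by simp [hqdef]), hqlast']
          have h2 : (v :: w :: t).getLast? = t.getLast?.or (some w) := by
            have hvw2 : v :: w :: t = [v, w] ++ t := by simp
            rw [hvw2, List.getLast?_append]; simp
          rw [← hplast, hpdec, hp'def, List.append_assoc, List.getLast?_append,
            List.getLast?_append, List.getLast?_append, h1, h2]
        · rw [hpdec] at hpchain
          rw [hp'def, List.append_assoc, List.Chain', List.isChain_append] at *
          obtain ⟨hs, hvwt, hconn⟩ := hpchain
          refine ⟨hs, ?_, ?_⟩
          · rw [List.isChain_append]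
            have htail : (w :: t).Chain' E := hvwt.tail
            rw [List.Chain', List.isChain_cons] at htail
            refine ⟨hqchain, htail.2, ?_⟩
            intro a ha b hb
            have h1 : q.getLast? = some w := by
              rw [List.getLast?_eq_getLast (l := q) (by simp [hqdef]), hqlast']
            rw [h1] at ha
            obtain rfl : w = a := by simpa using ha
            exact htail.1 b hb
          · intro a ha b hb
            refine hconn a ha b ?_
            simp only [hqdef] at hb ⊢
            simpa using hb
      -- delay comparison
      have hkey := hpmin p' hp'dipath
      have e1 : pathDelay δ p = pathDelay δ (s ++ [v]) + δ v w + pathDelay δ (w :: t) := by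
        rw [hpdec, pathDelay_glue δ v (w :: t) s, pathDelay_cons_cons]
        ring
      have e2 : pathDelay δ p' = pathDelay δ (s ++ [v]) + pathDelay δ q + pathDelay δ (w :: t) := by
        have h1 : p' = (s ++ q.dropLast) ++ w :: t := by
          rw [hp'def]
          conv_lhs => rw [← hqdec]
          simp
        rw [h1, pathDelay_glue δ w t (s ++ q.dropLast)]
        have h2 : s ++ q.dropLast ++ [w] = s ++ q := by
          rw [List.append_assoc, hqdec]
        rw [h2]
        have h3 : pathDelay δ (s ++ q) = pathDelay δ (s ++ [v]) + pathDelay δ q := by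
          rw [hqdef, pathDelay_glue δ v m s]
        rw [h3]
      rw [e1, e2] at hkey
      have : δ v w ≤ pathDelay δ q := by linarith
      calc pathDelay δ [v, w] = δ v w := by simp [pathDelay]
        _ ≤ pathDelay δ q := this
end

section
/- If P is a minimum-delay directed path from x to y, then every edge of P is essential; consequently, for every pair of nodes x, y joined by a directed path in G, the minimum delay from x to y within the subgraph H* equals the minimum delay from x to y in G. -/
section AuxLemmas

variable {V : Type*}

lemma pathDelay_nil (δ : V → V → ℝ) : pathDelay δ [] = 0 := by simp [pathDelay]

lemma pathDelay_single (δ : V → V → ℝ) (x : V) : pathDelay δ [x] = 0 := by simp [pathDelay]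

lemma pathDelay_cons2 (δ : V → V → ℝ) (x y : V) (l : List V) :
    pathDelay δ (x :: y :: l) = δ x y + pathDelay δ (y :: l) := by
  simp [pathDelay]

lemma pathDelay_append (δ : V → V → ℝ) (s : List V) (a : V) (t : List V) :
    pathDelay δ (s ++ a :: t) = pathDelay δ (s ++ [a]) + pathDelay δ (a :: t) := by
  induction s with
  | nil => simp [pathDelay_single]
  | cons b s ih =>
    cases s with
    | nil => simp [pathDelay_cons2, pathDelay_single]
    | cons c s' =>
      simp only [List.cons_append, pathDelay_cons2]
      rw [← List.cons_append, ← List.cons_append, ih]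
      ring

lemma pathDelay_nonneg {E : V → V → Prop} {δ : V → V → ℝ} (hδ : ∀ a b, E a b → 0 < δ a b)
    {l : List V} (h : l.Chain' E) : 0 ≤ pathDelay δ l := by
  induction l with
  | nil => simp [pathDelay_nil]
  | cons x l ih =>
    cases l with
    | nil => simp [pathDelay_single]
    | cons y l' =>
      rw [pathDelay_cons2]
      have h1 := (List.isChain_cons_cons.1 h).1
      have h2 := (List.isChain_cons_cons.1 h).2
      have := hδ _ _ h1
      have := ih h2
      linarith

lemma head?_append_cons (u : List V) (a : V) (t : List V) :
    (u ++ a :: t).head? = (u ++ [a]).head? := by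
  cases u <;> simp

lemma chain'_of_forall_infix {R : V → V → Prop} :
    ∀ {p : List V}, (∀ a b, [a, b] <:+: p → R a b) → p.Chain' R
  | [], _ => List.isChain_nil
  | [_], _ => List.isChain_singleton _
  | x :: y :: l, h => by
    refine List.isChain_cons_cons.2 ?_
    refine ⟨h x y ⟨[], l, by simp⟩, chain'_of_forall_infix fun a b hab => h a b ?_⟩
    exact hab.trans (List.suffix_cons x (y :: l)).isInfix

lemma exists_dup_decomp : ∀ {l : List V}, ¬ l.Nodup →
    ∃ (u : List V) (v : V) (m w : List V), l = u ++ v :: m ++ v :: w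
  | [], h => absurd List.nodup_nil h
  | a :: t, h => by
    by_cases ha : a ∈ t
    · obtain ⟨m, w, rfl⟩ := List.append_of_mem ha
      exact ⟨[], a, m, w, by simp⟩
    · have : ¬ t.Nodup := fun ht => h (List.nodup_cons.2 ⟨ha, ht⟩)
      obtain ⟨u, v, m, w, rfl⟩ := exists_dup_decomp this
      exact ⟨a :: u, v, m, w, by simp⟩

lemma shrink_aux [Fintype V] {E : V → V → Prop} {δ : V → V → ℝ}
    (hδ : ∀ a b, E a b → 0 < δ a b) :
    ∀ n (p : List V), p.length ≤ n → p.Chain' E → 2 ≤ p.length →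
    ∃ p' : List V, p'.Chain' E ∧ 2 ≤ p'.length ∧ p'.length ≤ Fintype.card V + 1 ∧
      p'.head? = p.head? ∧ p'.getLast? = p.getLast? ∧ pathDelay δ p' ≤ pathDelay δ p := by
  intro n
  induction n with
  | zero => intro p hn _ h2; omega
  | succ n ih =>
    intro p hn hc h2
    by_cases hlen : p.length ≤ Fintype.card V + 1
    · exact ⟨p, hc, h2, hlen, rfl, rfl, le_refl _⟩
    · push_neg at hlen
      have hpne : p ≠ [] := by
        intro h; rw [h] at h2; simp at h2
      have hdl : ¬ p.dropLast.Nodup := by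
        intro hnd
        have := hnd.length_le_card
        rw [List.length_dropLast] at this
        omega
      obtain ⟨u, v, m, w', hdecomp⟩ := exists_dup_decomp hdl
      have hp : p = u ++ v :: m ++ v :: (w' ++ [p.getLast hpne]) := by
        conv_lhs => rw [← List.dropLast_append_getLast hpne, hdecomp]
        simp
      set w : List V := w' ++ [p.getLast hpne] with hw
      have hwne : w ≠ [] := by simp [hw]
      -- the shortened path
      set p' : List V := u ++ v :: w with hp'
      have hlen' : p'.length < p.length := by
        rw [hp, hp']; simp
      have hwlen : 1 ≤ w.length := List.length_pos_iff.2 hwne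
      have h2' : 2 ≤ p'.length := by
        rw [hp']; simp; omega
      -- chain facts
      have hc2 : (u ++ ((v :: m) ++ (v :: w))).Chain' E := by
        have h := hc; rw [hp, List.append_assoc] at h; exact h
      have hcu : u.Chain' E := (List.isChain_append.1 hc2).1
      have hcin : ((v :: m) ++ (v :: w)).Chain' E := (List.isChain_append.1 hc2).2.1
      have hjun := (List.isChain_append.1 hc2).2.2
      have hcvw : (v :: w).Chain' E := (List.isChain_append.1 hcin).2.1
      have hc' : p'.Chain' E := by
        rw [hp']
        refine List.isChain_append.2 ⟨hcu, hcvw, fun x hx y hy => ?_⟩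
        refine hjun x hx y ?_
        simpa using hy
      -- delay comparison
      have hcvmv : ((v :: m) ++ [v]).Chain' E := by
        refine hc.infix ⟨u, w, ?_⟩
        rw [hp]; simp
      have hdelay : pathDelay δ p' ≤ pathDelay δ p := by
        rw [hp, hp']
        rw [show ((u ++ v :: m ++ v :: w : List V)) = u ++ v :: (m ++ v :: w) from by simp,
          pathDelay_append δ u v (m ++ v :: w),
          pathDelay_append δ u v w,
          show (v : V) :: (m ++ v :: w) = (v :: m) ++ v :: w from by simp,
          pathDelay_append δ (v :: m) v w]
        have := pathDelay_nonneg hδ hcvmv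
        linarith
      -- endpoints
      have hhead : p'.head? = p.head? := by
        rw [hp, hp']
        cases u <;> simp
      have hlast : p'.getLast? = p.getLast? := by
        rw [hp, hp', List.getLast?_append_cons, List.getLast?_append_cons]
      obtain ⟨q, hq1, hq2, hq3, hq4, hq5, hq6⟩ := ih p' (by omega) hc' h2'
      exact ⟨q, hq1, hq2, hq3, hq4.trans hhead, hq5.trans hlast, hq6.trans hdelay⟩

lemma exists_min_delay_path [Fintype V] {E : V → V → Prop} {δ : V → V → ℝ}
    (hδ : ∀ a b, E a b → 0 < δ a b) {x y : V} (h : ∃ p, IsDipath E x y p) :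
    ∃ p, IsMinDelayPath E δ x y p := by
  classical
  set S : Set (List V) := {p | IsDipath E x y p ∧ p.length ≤ Fintype.card V + 1} with hS
  have hfin : S.Finite := (List.finite_length_le V (Fintype.card V + 1)).subset
    fun l hl => hl.2
  have hshrink : ∀ q, IsDipath E x y q → ∃ q' ∈ S, pathDelay δ q' ≤ pathDelay δ q := by
    intro q hq
    obtain ⟨q', hc', h2', hlen', hhead', hlast', hd'⟩ :=
      shrink_aux hδ q.length q (le_refl _) hq.2.2.2 hq.1
    exact ⟨q', ⟨⟨h2', hhead'.trans hq.2.1, hlast'.trans hq.2.2.1, hc'⟩, hlen'⟩, hd'⟩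
  obtain ⟨p0, hp0⟩ := h
  obtain ⟨q0, hq0S, _⟩ := hshrink p0 hp0
  obtain ⟨pm, hpmS, hpmmin⟩ := Set.exists_min_image S (pathDelay δ) hfin ⟨q0, hq0S⟩
  refine ⟨pm, hpmS.1, fun q hq => ?_⟩
  obtain ⟨q', hq'S, hq'd⟩ := hshrink q hq
  exact (hpmmin q' hq'S).trans hq'd

lemma essential_of_infix_minDelay [Fintype V] {E : V → V → Prop} {δ : V → V → ℝ}
    (hδ : ∀ a b, E a b → 0 < δ a b) {x y : V} {p : List V}
    (hp : IsMinDelayPath E δ x y p) {a b : V} (hinf : [a, b] <:+: p) :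
    EssentialEdge E δ a b := by
  obtain ⟨u, w, hdecomp⟩ := hinf
  have hpw : p = u ++ a :: (b :: w) := by rw [← hdecomp]; simp
  have hEab : E a b := by
    have := hp.1.2.2.2.infix ⟨u, w, hdecomp⟩
    exact (List.isChain_cons_cons.1 this).1
  refine ⟨hEab, ⟨by simp, rfl, rfl, List.isChain_pair.2 hEab⟩, fun q hq => ?_⟩
  obtain ⟨h2q, hheadq, hlastq, hcq⟩ := hq
  -- write q = (a :: t') ++ [b]
  obtain ⟨t, rfl⟩ : ∃ t, q = a :: t := by
    cases q with
    | nil => simp at hheadq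
    | cons c t =>
      simp only [List.head?_cons, Option.some.injEq] at hheadq
      exact ⟨t, by rw [hheadq]⟩
  have htne : t ≠ [] := by
    intro h; rw [h] at h2q; simp at h2q
  have htlast : t.getLast htne = b := by
    have : (a :: t).getLast (by simp) = b := by
      rw [List.getLast_eq_iff_getLast?_eq_some]; exact hlastq
    rwa [List.getLast_cons htne] at this
  have htdecomp : t = t.dropLast ++ [b] := by
    conv_lhs => rw [← List.dropLast_append_getLast htne, htlast]
  set t' : List V := t.dropLast with ht'
  have hq2 : a :: t = (a :: t') ++ [b] := by rw [htdecomp]; simp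
  -- the spliced path
  set p' : List V := u ++ a :: (t' ++ b :: w) with hp'def
  -- chain facts of p
  have hcp : (u ++ (a :: b :: w)).Chain' E := by rw [← hpw]; exact hp.1.2.2.2
  have hcu : u.Chain' E := (List.isChain_append.1 hcp).1
  have hjunp := (List.isChain_append.1 hcp).2.2
  have hcbw : (b :: w).Chain' E := (List.isChain_cons_cons.1 (List.isChain_append.1 hcp).2.1).2
  -- chain facts of q
  have hcq2 : ((a :: t') ++ [b]).Chain' E := by rw [← hq2]; exact hcq
  have hcat' : (a :: t').Chain' E := (List.isChain_append.1 hcq2).1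
  have hjunq := (List.isChain_append.1 hcq2).2.2
  -- p' is a dipath from x to y
  have hcp' : p'.Chain' E := by
    rw [hp'def, show (a :: (t' ++ b :: w) : List V) = (a :: t') ++ (b :: w) from by simp]
    refine List.isChain_append.2 ⟨hcu, ?_, fun r hr s hs => hjunp r hr s (by simpa using hs)⟩
    exact List.isChain_append.2 ⟨hcat', hcbw, fun r hr s hs => hjunq r hr s (by simpa using hs)⟩
  have hdip' : IsDipath E x y p' := by
    refine ⟨by rw [hp'def]; simp; omega, ?_, ?_, hcp'⟩
    · have := hp.1.2.1
      rw [hpw] at this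
      rw [hp'def]
      rw [head?_append_cons] at this ⊢
      exact this
    · have := hp.1.2.2.1
      rw [hpw, show (u ++ a :: (b :: w) : List V) = (u ++ [a]) ++ b :: w from by simp,
        List.getLast?_append_cons] at this
      rw [hp'def, show (u ++ a :: (t' ++ b :: w) : List V) = (u ++ a :: t') ++ b :: w from by simp,
        List.getLast?_append_cons]
      exact this
  -- delay comparison
  have hle := hp.2 p' hdip'
  rw [hpw, hp'def, pathDelay_append δ u a (b :: w), pathDelay_append δ u a (t' ++ b :: w),
    pathDelay_cons2,
    show (a :: (t' ++ b :: w) : List V) = (a :: t') ++ b :: w from by simp,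
    pathDelay_append δ (a :: t') b w] at hle
  rw [hq2, show ((a :: t') ++ [b] : List V) = (a :: t') ++ b :: [] from rfl,
    pathDelay_append δ (a :: t') b []]
  simp only [pathDelay_cons2, pathDelay_single, pathDelay_nil] at *
  linarith

end AuxLemmas

/-- If `P` is a minimum-delay directed path from `x` to `y`, then every edge of `P` is
essential; consequently, for every pair of nodes `x, y` joined by a directed path in `G`,
the minimum delay from `x` to `y` within the aggregate backbone `H*` (the subgraph of
essential edges) equals the minimum delay from `x` to `y` in `G`. -/
theorem min_delay_paths_use_essential_edges_and_backbone_preserves_min_delay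
    {V : Type*} [Fintype V] (E : V → V → Prop) (δ : V → V → ℝ)
    (hδ : ∀ a b, E a b → 0 < δ a b) :
    (∀ x y : V, ∀ p : List V, IsMinDelayPath E δ x y p →
      ∀ a b : V, [a, b] <:+: p → EssentialEdge E δ a b) ∧
    (∀ x y : V, (∃ p, IsDipath E x y p) →
      sInf {d : ℝ | ∃ p, IsDipath (fun a b => EssentialEdge E δ a b) x y p ∧ pathDelay δ p = d}
        = sInf {d : ℝ | ∃ p, IsDipath E x y p ∧ pathDelay δ p = d}) := by
  refine ⟨fun x y p hp a b hinf => essential_of_infix_minDelay hδ hp hinf, fun x y h => ?_⟩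
  obtain ⟨pm, hpm⟩ := exists_min_delay_path hδ h
  set m := pathDelay δ pm with hm
  have hGle : ∀ d ∈ {d : ℝ | ∃ p, IsDipath E x y p ∧ pathDelay δ p = d}, m ≤ d := by
    rintro d ⟨q, hq, rfl⟩
    exact hpm.2 q hq
  have hmH : m ∈ {d : ℝ | ∃ p,
      IsDipath (fun a b => EssentialEdge E δ a b) x y p ∧ pathDelay δ p = d} := by
    refine ⟨pm, ⟨hpm.1.1, hpm.1.2.1, hpm.1.2.2.1, ?_⟩, rfl⟩
    exact chain'_of_forall_infix fun a b hab => essential_of_infix_minDelay hδ hpm hab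
  have hsub : {d : ℝ | ∃ p,
      IsDipath (fun a b => EssentialEdge E δ a b) x y p ∧ pathDelay δ p = d} ⊆
      {d : ℝ | ∃ p, IsDipath E x y p ∧ pathDelay δ p = d} := by
    rintro d ⟨q, ⟨h1, h2, h3, h4⟩, rfl⟩
    exact ⟨q, ⟨h1, h2, h3, List.IsChain.imp (fun a b hab => hab.1) h4⟩, rfl⟩
  have h1 : IsLeast {d : ℝ | ∃ p,
      IsDipath (fun a b => EssentialEdge E δ a b) x y p ∧ pathDelay δ p = d} m :=
    ⟨hmH, fun d hd => hGle d (hsub hd)⟩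
  have h2 : IsLeast {d : ℝ | ∃ p, IsDipath E x y p ∧ pathDelay δ p = d} m :=
    ⟨⟨pm, hpm.1, rfl⟩, hGle⟩
  rw [h1.csInf_eq, h2.csInf_eq]
end

section
/- Let the events of E be processed in increasing order of time by the following algorithm: maintain for each node v a vector Cl_v : V → ℝ ∪ {⊥}, initialized with Cl_v(u) = ⊥ for all u ≠ v; on processing an event (v,w,s), update Cl_w(u) := max(Cl_w(u), Cl_v(u)) for every u ∉ {v,w}, and set Cl_w(v) := max(Cl_w(v), s). Then for every time t, after processing exactly the events of E with time ≤ t, for all nodes u ≠ v one has Cl_v(u) = φ_{v,t}(u), i.e., the stored clock value equals the maximum first-event time over all time-respecting paths from u to v ending by time t (and equals ⊥ if no such path exists). -/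
/-- `L` is a time-respecting path from `u` to `v` ending by time `t`: a nonempty sequence of
communication events `(x₀,x₁,t₁), (x₁,x₂,t₂), …, (x_{k−1},x_k,t_k)` from the event set `Evs`
(each event being a triple (sender, receiver, time)) with `x₀ = u`, `x_k = v` and
`t₁ < t₂ < ⋯ < t_k ≤ t`. -/
def IsTRPath {V : Type*} (Evs : Finset (V × V × ℝ)) (u v : V) (t : ℝ)
    (L : List (V × V × ℝ)) : Prop :=
  L ≠ [] ∧ (∀ e ∈ L, e ∈ Evs) ∧
  (∃ e, L.head? = some e ∧ e.1 = u) ∧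
  (∃ e, L.getLast? = some e ∧ e.2.1 = v ∧ e.2.2 ≤ t) ∧
  L.Chain' (fun e f => e.2.1 = f.1 ∧ e.2.2 < f.2.2)

/-- The view `φ_{v,t}(u)` of `u` held by `v` at time `t`: equal to `t` if `u = v`, and
otherwise the maximum of the first-event times over all time-respecting paths from `u`
to `v` ending by time `t`, taken to be `⊥` if no such path exists (here values live in
`EReal`, whose bottom element `⊥` is smaller than every real number). -/
noncomputable def view {V : Type*} [DecidableEq V] (Evs : Finset (V × V × ℝ))
    (v : V) (t : ℝ) (u : V) : EReal :=
  if u = v then (t : EReal)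
  else sSup {x : EReal | ∃ L e, IsTRPath Evs u v t L ∧ L.head? = some e ∧ x = (e.2.2 : EReal)}

/-- One step of the vector-clock algorithm: processing the event `ev = (v, w, s)` updates the
clock of the receiver `w` by `Cl_w(u) := max (Cl_w(u), Cl_v(u))` for every `u ∉ {v, w}`, and
`Cl_w(v) := max (Cl_w(v), s)`; all other entries are unchanged. -/
noncomputable def clockStep {V : Type*} [DecidableEq V] (st : V → V → EReal) (ev : V × V × ℝ) :
    V → V → EReal :=
  fun a u =>
    if a = ev.2.1 then
      if u = ev.1 then max (st a u) ((ev.2.2 : ℝ) : EReal)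
      else if u = a then st a u
      else max (st a u) (st ev.1 u)
    else st a u

section Aux
open List
set_option linter.unusedSectionVars false
variable {V : Type*} [DecidableEq V]

abbrev Ev (V : Type*) := V × V × ℝ

def tr : Ev V → Ev V → Prop := fun e f => e.2.1 = f.1 ∧ e.2.2 < f.2.2

lemma pathTimes {P : List (Ev V)} (h : P.Chain' tr) :
    P.Pairwise (fun e f => e.2.2 < f.2.2) := by
  haveI : IsTrans (Ev V) (fun e f => e.2.2 < f.2.2) := ⟨fun a b c h1 h2 => h1.trans h2⟩
  exact List.isChain_iff_pairwise.mp (h.imp fun a b hab => hab.2)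

lemma mem_le_getLast {P : List (Ev V)} (hp : P.Pairwise (fun e f => e.2.2 < f.2.2))
    {f g : Ev V} (hf : f ∈ P) (hg : P.getLast? = some g) : f.2.2 ≤ g.2.2 := by
  have hne : P ≠ [] := by rintro rfl; simp at hf
  have hgl : P.getLast hne = g := by
    rw [List.getLast?_eq_getLast hne] at hg; exact Option.some_injective _ hg
  have hdec : P.dropLast ++ [g] = P := by rw [← hgl]; exact List.dropLast_append_getLast hne
  rw [← hdec] at hf hp
  rcases List.mem_append.mp hf with h | h
  · exact le_of_lt ((List.pairwise_append.mp hp).2.2 f h g (by simp))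
  · simp at h; subst h; exact le_refl _

lemma decompose {M : List (Ev V)} {e0 : Ev V} (htlt : ∀ f ∈ M, f.2.2 < e0.2.2) :
    ∀ {P : List (Ev V)}, P.Pairwise (fun e f => e.2.2 < f.2.2) → (∀ f ∈ P, f ∈ M ++ [e0]) →
    (∀ f ∈ P, f ∈ M) ∨ ∃ Q, P = Q ++ [e0] ∧ ∀ f ∈ Q, f ∈ M := by
  intro P
  induction P using List.reverseRecOn with
  | nil => intro _ _; left; simp
  | append_singleton R g ih =>
    intro hp hm
    have hpR : ∀ f ∈ R, f.2.2 < g.2.2 := by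
      intro f hf
      exact (List.pairwise_append.mp hp).2.2 f hf g (by simp)
    rcases List.mem_append.mp (hm g (by simp)) with hg | hg
    · left
      intro f hf
      rcases List.mem_append.mp hf with hf | hf
      · rcases List.mem_append.mp (hm f (List.mem_append_left _ hf)) with h | h
        · exact h
        · simp at h; subst h
          exact absurd ((hpR f hf).trans (htlt g hg)) (lt_irrefl _)
      · simp at hf; subst hf; exact hg
    · simp at hg; subst hg
      right
      refine ⟨R, rfl, fun f hf => ?_⟩
      rcases List.mem_append.mp (hm f (List.mem_append_left _ hf)) with h | h
      · exact h
      · simp at h; subst h; exact absurd (hpR f hf) (lt_irrefl _)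

def ListPath (Es : List (Ev V)) (u v : V) (P : List (Ev V)) : Prop :=
  P ≠ [] ∧ (∀ f ∈ P, f ∈ Es) ∧
  (∃ e, P.head? = some e ∧ e.1 = u) ∧
  (∃ e, P.getLast? = some e ∧ e.2.1 = v) ∧
  P.Chain' tr

noncomputable def pset (Es : List (Ev V)) (v u : V) : Set EReal :=
  {x | ∃ P e, ListPath Es u v P ∧ P.head? = some e ∧ x = (e.2.2 : EReal)}

lemma pset_mono {Es Es' : List (Ev V)} (h : ∀ f ∈ Es, f ∈ Es') (v u : V) :
    pset Es v u ⊆ pset Es' v u := by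
  rintro x ⟨P, e, ⟨h1, h2, h3, h4, h5⟩, he, hx⟩
  exact ⟨P, e, ⟨h1, fun f hf => h f (h2 f hf), h3, h4, h5⟩, he, hx⟩

lemma getLast?_mem' {α : Type*} {l : List α} {x : α} (h : l.getLast? = some x) : x ∈ l := by
  obtain ⟨hne, rfl⟩ := List.mem_getLast?_eq_getLast h
  exact List.getLast_mem hne

lemma listpath_concat {M : List (Ev V)} {e0 : Ev V} (htlt : ∀ f ∈ M, f.2.2 < e0.2.2)
    {u : V} {Q : List (Ev V)} (h : ListPath M u e0.1 Q) :
    ListPath (M ++ [e0]) u e0.2.1 (Q ++ [e0]) := by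
  obtain ⟨h1, h2, h3, ⟨g, hg, hgv⟩, h5⟩ := h
  refine ⟨by simp, ?_, ?_, ?_, ?_⟩
  · intro f hf
    rcases List.mem_append.mp hf with h | h
    · exact List.mem_append_left _ (h2 f h)
    · exact List.mem_append_right _ h
  · obtain ⟨e, he, heu⟩ := h3
    exact ⟨e, by rw [List.head?_append_of_ne_nil _ h1]; exact he, heu⟩
  · exact ⟨e0, by simp, rfl⟩
  · unfold List.Chain'; rw [List.isChain_append]
    refine ⟨h5, List.isChain_singleton _, fun x hx y hy => ?_⟩
    simp at hy; subst hy
    rw [hg] at hx; simp at hx; subst hx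
    exact ⟨hgv, htlt g (h2 g (getLast?_mem' hg))⟩

lemma listpath_single {M : List (Ev V)} {e0 : Ev V} :
    ListPath (M ++ [e0]) e0.1 e0.2.1 [e0] :=
  ⟨by simp, by simp, ⟨e0, rfl, rfl⟩, ⟨e0, rfl, rfl⟩, List.isChain_singleton _⟩

lemma listpath_decompose {M : List (Ev V)} {e0 : Ev V} (htlt : ∀ f ∈ M, f.2.2 < e0.2.2)
    {u v : V} {P : List (Ev V)} (h : ListPath (M ++ [e0]) u v P) :
    ListPath M u v P ∨
    (v = e0.2.1 ∧ ((P = [e0] ∧ u = e0.1) ∨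
      ∃ Q, P = Q ++ [e0] ∧ ListPath M u e0.1 Q ∧ Q.head? = P.head?)) := by
  obtain ⟨h1, h2, h3, h4, h5⟩ := h
  rcases decompose htlt (pathTimes h5) h2 with hM | ⟨Q, rfl, hQ⟩
  · exact Or.inl ⟨h1, hM, h3, h4, h5⟩
  · right
    obtain ⟨g, hg, hgv⟩ := h4
    have hgl : e0 = g := by simpa using hg
    subst hgl
    refine ⟨hgv.symm, ?_⟩
    rcases eq_or_ne Q [] with rfl | hQne
    · left
      obtain ⟨e, he, heu⟩ := h3
      simp at he; subst he
      exact ⟨rfl, heu.symm⟩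
    · right
      unfold List.Chain' at h5; rw [List.isChain_append] at h5
      obtain ⟨hc1, _, hc3⟩ := h5
      obtain ⟨q, hq⟩ := List.getLast?_isSome.mpr hQne |> Option.isSome_iff_exists.mp
      have hq12 : tr q e0 := hc3 q hq e0 rfl
      refine ⟨Q, rfl, ⟨hQne, hQ, ?_, ⟨q, hq, hq12.1⟩, hc1⟩,
        (List.head?_append_of_ne_nil _ hQne).symm⟩
      obtain ⟨e, he, heu⟩ := h3
      rw [List.head?_append_of_ne_nil _ hQne] at he
      exact ⟨e, he, heu⟩

lemma sSup_pset_other {M : List (Ev V)} {e0 : Ev V} (htlt : ∀ f ∈ M, f.2.2 < e0.2.2)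
    {v : V} (hv : v ≠ e0.2.1) (u : V) :
    sSup (pset (M ++ [e0]) v u) = sSup (pset M v u) := by
  apply _root_.le_antisymm
  · apply sSup_le
    rintro x ⟨P, e, hP, he, rfl⟩
    rcases listpath_decompose htlt hP with h | ⟨h, _⟩
    · exact le_sSup ⟨P, e, h, he, rfl⟩
    · exact absurd h hv
  · exact sSup_le_sSup (pset_mono (fun f hf => List.mem_append_left _ hf) v u)

lemma sSup_pset_sender {M : List (Ev V)} {e0 : Ev V} (htlt : ∀ f ∈ M, f.2.2 < e0.2.2) :
    sSup (pset (M ++ [e0]) e0.2.1 e0.1) =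
      max (sSup (pset M e0.2.1 e0.1)) ((e0.2.2 : ℝ) : EReal) := by
  apply _root_.le_antisymm
  · apply sSup_le
    rintro x ⟨P, e, hP, he, rfl⟩
    rcases listpath_decompose htlt hP with h | ⟨_, ⟨rfl, _⟩ | ⟨Q, rfl, hQ, hhd⟩⟩
    · exact le_max_of_le_left (le_sSup ⟨P, e, h, he, rfl⟩)
    · simp at he; subst he; exact le_max_right _ _
    · have : e ∈ Q := by
        rcases Q with _ | ⟨q, Q'⟩
        · exact absurd rfl hQ.1
        · rw [← hhd] at he; simp at he; subst he; simp
      have := htlt e (hQ.2.1 e this)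
      exact le_max_of_le_right (le_of_lt (EReal.coe_lt_coe_iff.mpr this))
  · apply max_le
    · exact sSup_le_sSup (pset_mono (fun f hf => List.mem_append_left _ hf) _ _)
    · exact le_sSup ⟨[e0], e0, listpath_single, rfl, rfl⟩

lemma sSup_pset_recv {M : List (Ev V)} {e0 : Ev V} (htlt : ∀ f ∈ M, f.2.2 < e0.2.2)
    {u : V} (hu : u ≠ e0.1) :
    sSup (pset (M ++ [e0]) e0.2.1 u) =
      max (sSup (pset M e0.2.1 u)) (sSup (pset M e0.1 u)) := by
  apply _root_.le_antisymm
  · apply sSup_le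
    rintro x ⟨P, e, hP, he, rfl⟩
    rcases listpath_decompose htlt hP with h | ⟨_, ⟨rfl, h⟩ | ⟨Q, rfl, hQ, hhd⟩⟩
    · exact le_max_of_le_left (le_sSup ⟨P, e, h, he, rfl⟩)
    · exact absurd h.symm hu.symm
    · exact le_max_of_le_right (le_sSup ⟨Q, e, hQ, hhd.trans he, rfl⟩)
  · apply max_le
    · exact sSup_le_sSup (pset_mono (fun f hf => List.mem_append_left _ hf) _ _)
    · apply sSup_le
      rintro x ⟨Q, e, hQ, he, rfl⟩
      refine le_sSup ⟨Q ++ [e0], e, listpath_concat htlt hQ, ?_, rfl⟩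
      rw [List.head?_append_of_ne_nil _ hQ.1]; exact he
lemma invariant (L : List (Ev V)) (hs : L.Pairwise (fun e f => e.2.2 < f.2.2)) :
    ∀ v u : V, u ≠ v →
      (L.foldl clockStep fun _ _ => (⊥ : EReal)) v u = sSup (pset L v u) := by
  induction L using List.reverseRecOn with
  | nil =>
    intro v u huv
    have : pset ([] : List (Ev V)) v u = ∅ := by
      ext x
      simp only [pset, Set.mem_setOf_eq, Set.mem_empty_iff_false, iff_false]
      rintro ⟨P, e, ⟨h1, h2, _⟩, _⟩
      rcases P with _ | ⟨p, P'⟩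
      · exact h1 rfl
      · simpa using h2 p (by simp)
    rw [this, sSup_empty]
    rfl
  | append_singleton M e0 ih =>
    intro v u huv
    have hsM : M.Pairwise (fun e f => e.2.2 < f.2.2) := (List.pairwise_append.mp hs).1
    have htlt : ∀ f ∈ M, f.2.2 < e0.2.2 := fun f hf =>
      (List.pairwise_append.mp hs).2.2 f hf e0 (by simp)
    rw [List.foldl_append]
    set st := M.foldl clockStep (fun _ _ => (⊥ : EReal)) with hst
    simp only [List.foldl_cons, List.foldl_nil]
    have ihs : ∀ v u : V, u ≠ v → st v u = sSup (pset M v u) := fun v u h => ih hsM v u h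
    unfold clockStep
    rcases eq_or_ne v e0.2.1 with rfl | hv
    · rw [if_pos rfl]
      rcases eq_or_ne u e0.1 with rfl | hu
      · rw [if_pos rfl, ihs _ _ huv, sSup_pset_sender htlt]
      · rw [if_neg hu, if_neg huv, ihs _ _ huv, ihs _ _ hu,
          sSup_pset_recv htlt hu]
    · rw [if_neg hv, ihs _ _ huv, sSup_pset_other htlt hv]

end Aux

/-- Correctness of the vector-clock algorithm: process the events in increasing order of
time, starting from the all-`⊥` initialization.  Then for every time `t`, after processing
exactly the events with time `≤ t` (the sorted list `L`), the stored clock value `Cl_v(u)`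
equals the view `φ_{v,t}(u)` for all nodes `u ≠ v`, i.e. the maximum first-event time over
all time-respecting paths from `u` to `v` ending by time `t` (and `⊥` if no such path
exists). -/
theorem vector_clock_correct {V : Type*} [Fintype V] [DecidableEq V]
    (Evs : Finset (V × V × ℝ))
    (hself : ∀ e ∈ Evs, e.1 ≠ e.2.1)
    (htimes : ∀ e ∈ Evs, ∀ f ∈ Evs, e.2.2 = f.2.2 → e = f)
    (t : ℝ) (L : List (V × V × ℝ))
    (hsorted : L.Pairwise (fun e f => e.2.2 < f.2.2))
    (hmem : ∀ e, e ∈ L ↔ e ∈ Evs ∧ e.2.2 ≤ t) :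
    ∀ v u : V, u ≠ v → (L.foldl clockStep fun _ _ => (⊥ : EReal)) v u = view Evs v t u := by
  intro v u huv
  rw [invariant L hsorted v u huv]
  unfold view
  rw [if_neg huv]
  congr 1
  ext x
  constructor
  · rintro ⟨P, e, ⟨h1, h2, h3, ⟨g, hg, hgv⟩, h5⟩, he, rfl⟩
    have hall : ∀ f ∈ P, f ∈ Evs ∧ f.2.2 ≤ t := fun f hf => (hmem f).mp (h2 f hf)
    exact ⟨P, e, ⟨h1, fun f hf => (hall f hf).1, h3,
      ⟨g, hg, hgv, (hall g (getLast?_mem' hg)).2⟩, h5⟩, he, rfl⟩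
  · rintro ⟨P, e, ⟨h1, h2, h3, ⟨g, hg, hgv, hgt⟩, h5⟩, he, rfl⟩
    have hmemL : ∀ f ∈ P, f ∈ L := fun f hf =>
      (hmem f).mpr ⟨h2 f hf, le_trans (mem_le_getLast (pathTimes h5) hf hg) hgt⟩
    exact ⟨P, e, ⟨h1, hmemL, h3, ⟨g, hg, hgv⟩, h5⟩, he, rfl⟩
end

section
/- Suppose φ_{v,t}(w) ≠ ⊥ and let s = φ_{v,t}(w). Then for every node u, φ_{v,t}(u) ≥ φ_{w,s}(u); that is, v's view at time t of any node u is at least as recent as the view of u that w held at the time s at which v's current information about w originated. -/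
/-- Along a time-respecting chain, the first event's time is at most the last event's time. -/
lemma head_time_le_last_time {V : Type*} :
    ∀ (L : List (V × V × ℝ)) (e f : V × V × ℝ),
    L.Chain' (fun a b => a.2.1 = b.1 ∧ a.2.2 < b.2.2) →
    L.head? = some e → L.getLast? = some f → e.2.2 ≤ f.2.2 := by
  intro L
  induction L with
  | nil => intro e f _ h; simp at h
  | cons a l ih =>
    intro e f hc he hf
    simp only [List.head?_cons, Option.some.injEq] at he
    subst he
    cases l with
    | nil =>
      simp only [List.getLast?_singleton, Option.some.injEq] at hf
      subst hf; exact le_refl _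
    | cons b l' =>
      unfold List.Chain' at hc; rw [List.isChain_cons_cons] at hc
      have h2 : b.2.2 ≤ f.2.2 := ih b f hc.2 rfl (by rw [← hf, List.getLast?_cons_cons])
      exact le_trans (le_of_lt hc.1.2) h2

/-- Suppose `φ_{v,t}(w) ≠ ⊥`, say `φ_{v,t}(w) = s` with `s` a real number.  Then for every
node `u`, `φ_{w,s}(u) ≤ φ_{v,t}(u)`: the view of `u` held by `v` at time `t` is at least as
recent as the view of `u` that `w` held at the time `s` at which `v`'s current information
about `w` originated. -/
theorem view_ge_view_at_origin {V : Type*} [Fintype V] [DecidableEq V]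
    (Evs : Finset (V × V × ℝ))
    (hself : ∀ e ∈ Evs, e.1 ≠ e.2.1)
    (htimes : ∀ e ∈ Evs, ∀ f ∈ Evs, e.2.2 = f.2.2 → e = f)
    (v w : V) (t s : ℝ) (hs : view Evs v t w = (s : EReal)) :
    ∀ u : V, view Evs w s u ≤ view Evs v t u := by
  intro u
  by_cases hwv : w = v
  · subst hwv
    rw [view, if_pos rfl] at hs
    have hts : t = s := by exact_mod_cast hs
    rw [← hts]
  · -- w ≠ v
    rw [view, if_neg hwv] at hs
    -- finiteness of the sets of candidate times
    have hfin : ∀ (a b : V) (r : ℝ),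
        Set.Finite {x : EReal | ∃ L e, IsTRPath Evs a b r L ∧ L.head? = some e ∧
          x = (e.2.2 : EReal)} := by
      intro a b r
      apply Set.Finite.subset (Evs.finite_toSet.image (fun e => (e.2.2 : EReal)))
      rintro x ⟨L, e, hL, he, rfl⟩
      exact ⟨e, hL.2.1 e (List.mem_of_mem_head? he), rfl⟩
    -- the sup defining s is attained by some path P
    have hne : Set.Nonempty {x : EReal | ∃ L e, IsTRPath Evs w v t L ∧ L.head? = some e ∧
        x = (e.2.2 : EReal)} := by
      by_contra h
      rw [Set.not_nonempty_iff_eq_empty] at h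
      rw [h, sSup_empty] at hs
      exact (EReal.bot_lt_coe s).ne hs
    have hmem := hne.csSup_mem (hfin w v t)
    rw [hs] at hmem
    obtain ⟨P, e₀, hP, hPhead, hse⟩ := hmem
    have he0s : e₀.2.2 = s := by exact_mod_cast hse.symm
    have he0w : e₀.1 = w := by
      obtain ⟨e', he', hw'⟩ := hP.2.2.1
      rw [hPhead] at he'
      rw [Option.some.inj he']
      exact hw'
    have he0mem : e₀ ∈ Evs := hP.2.1 e₀ (List.mem_of_mem_head? hPhead)
    obtain ⟨gP, hgP, hgPv, hgPt⟩ := hP.2.2.2.1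
    have hst : s ≤ t := by
      rw [← he0s]
      exact le_trans (head_time_le_last_time P e₀ gP hP.2.2.2.2 hPhead hgP) hgPt
    by_cases huw : u = w
    · subst huw
      rw [view, if_pos rfl, view, if_neg hwv, hs]
    · rw [view, if_neg huw]
      apply sSup_le
      rintro x ⟨Q, f₀, hQ, hQhead, rfl⟩
      obtain ⟨g, hgQ, hgw, hgs⟩ := hQ.2.2.2.1
      have hfg : f₀.2.2 ≤ g.2.2 := head_time_le_last_time Q f₀ g hQ.2.2.2.2 hQhead hgQ
      by_cases huv : u = v
      · rw [view, if_pos huv]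
        exact_mod_cast le_trans hfg (le_trans hgs hst)
      · rw [view, if_neg huv]
        apply le_sSup
        refine ⟨Q ++ P, f₀, ?_, ?_, rfl⟩
        · -- junction: last time of Q is strictly before s = e₀.2.2
          have hgmem : g ∈ Evs := hQ.2.1 g (List.mem_of_mem_getLast? hgQ)
          have hglt : g.2.2 < e₀.2.2 := by
            rcases lt_or_eq_of_le (le_trans hgs (he0s ▸ le_refl _ : s ≤ e₀.2.2)) with h | h
            · exact h
            · exfalso
              have := htimes g hgmem e₀ he0mem h
              apply hself e₀ he0mem
              rw [← he0w] at hgw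
              rw [← this, hgw, this]
          refine ⟨by simp [hQ.1], ?_, ?_, ?_, ?_⟩
          · intro e he
            rcases List.mem_append.mp he with h | h
            · exact hQ.2.1 e h
            · exact hP.2.1 e h
          · refine ⟨f₀, ?_, ?_⟩
            · rw [List.head?_append, hQhead]; rfl
            · obtain ⟨e', he', hu'⟩ := hQ.2.2.1
              rw [hQhead] at he'
              rw [Option.some.inj he']
              exact hu'
          · refine ⟨gP, ?_, hgPv, hgPt⟩
            rw [List.getLast?_append, hgP]; rfl
          · unfold List.Chain'; rw [List.isChain_append]
            refine ⟨hQ.2.2.2.2, hP.2.2.2.2, ?_⟩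
            intro x hx y hy
            have hx' : x = g := Option.some.inj (hx.symm.trans hgQ)
            have hy' : y = e₀ := Option.some.inj (hy.symm.trans hPhead)
            subst hx'; subst hy'
            exact ⟨hgw.trans he0w.symm, hglt⟩
        · rw [List.head?_append, hQhead]; rfl
end

section
/- There exists ε₀ ≥ 0 such that for all ε ≥ ε₀ and all nodes x, y joined by a directed path in G, every directed path from x to y that minimizes the ε-total delay has the minimum possible number of edges among all directed paths from x to y; that is, as the per-node delay grows, minimum-delay paths are exactly paths of minimum hop-count. -/
/-- The `ε`-total delay of a directed path with `k` edges (so `k + 1` vertices): the sum of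
the delays of its edges plus `ε · (k − 1)`, i.e. an additional delay `ε` at each
intermediate node of the path. -/
noncomputable def epsTotalDelay {V : Type*} (δ : V → V → ℝ) (ε : ℝ) (p : List V) : ℝ :=
  pathDelay δ p + ε * ((p.length - 2 : ℕ) : ℝ)

private lemma isDipath_edges {V : Type*} {E : V → V → Prop} {p : List V}
    (hp : p.Chain' E) : ∀ q ∈ p.zip p.tail, E q.1 q.2 := by
  intro q hq
  obtain ⟨i, hi, rfl⟩ := List.mem_iff_getElem.1 hq
  have hlen : i < p.length - 1 := by
    simp only [List.length_zip, List.length_tail] at hi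
    omega
  have := List.isChain_iff_getElem.1 hp i (by omega)
  rw [List.getElem_zip]
  have htail : p.tail[i]'(by simp [List.length_tail]; omega) = p[i + 1]'(by omega) :=
    List.getElem_tail ..
  simpa [htail] using this

private lemma dipath_cut {V : Type*} {E : V → V → Prop} {x y : V} {p : List V}
    (hp : IsDipath E x y p) {i j : ℕ} (h1 : 1 ≤ i) (hij : i < j) (hj : j < p.length)
    (heq : p[i]'(by omega) = p[j]'hj) :
    ∃ r, IsDipath E x y r ∧ r.length < p.length := by
  obtain ⟨hlen, hhead, hlast, hchain⟩ := hp
  have hi : i < p.length := by omega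
  have htake_len : (p.take (i + 1)).length = i + 1 := by
    simp [List.length_take]; omega
  have hdrop_len : (p.drop (j + 1)).length = p.length - (j + 1) := by
    simp [List.length_drop]
  refine ⟨p.take (i + 1) ++ p.drop (j + 1), ⟨?_, ?_, ?_, ?_⟩, ?_⟩
  · simp only [List.length_append, htake_len, hdrop_len]; omega
  · rw [List.head?_append_of_ne_nil]
    · rw [← hhead]
      have : (p.take (i + 1)).head? = (p.take (i + 1))[0]? := by
        rw [List.head?_eq_getElem?]
      rw [this, List.getElem?_take, List.head?_eq_getElem?]
      simp [Nat.zero_lt_succ]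
    · intro h
      have := congrArg List.length h
      simp [htake_len] at this
  · -- getLast?
    rcases Nat.lt_or_ge (j + 1) p.length with hjl | hjl
    · have hne : p.drop (j + 1) ≠ [] := by
        intro h; have := congrArg List.length h; simp [hdrop_len] at this; omega
      rw [List.getLast?_append_of_ne_nil _ hne, ← hlast]
      rw [List.getLast?_eq_getElem?, List.getLast?_eq_getElem?, hdrop_len,
        List.getElem?_drop]
      congr 1
      omega
    · have hj' : j = p.length - 1 := by omega
      have hdropnil : p.drop (j + 1) = [] := by
        apply List.drop_eq_nil_of_le; omega
      rw [hdropnil, List.append_nil]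
      rw [List.getLast?_eq_getElem?, htake_len]
      simp only [Nat.add_sub_cancel]
      rw [List.getElem?_take]
      simp only [Nat.lt_succ_self, if_true]
      rw [List.getElem?_eq_getElem hi, heq]
      rw [List.getLast?_eq_getElem?] at hlast
      rw [← List.getElem?_eq_getElem hj, ← hlast, hj']
  · -- Chain'
    apply List.IsChain.append (hchain.take _) (hchain.drop _)
    intro a ha b hb
    have hane : (p.take (i + 1)) ≠ [] := by
      intro h; have := congrArg List.length h; simp [htake_len] at this
    have ha' : a = p[i] := by
      rw [List.getLast?_eq_getElem?, htake_len] at ha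
      simp only [Nat.add_sub_cancel] at ha
      rw [List.getElem?_take] at ha
      simp only [Nat.lt_succ_self, if_true, List.getElem?_eq_getElem hi,
        Option.some.injEq] at ha
      exact (Option.some_injective _ ha).symm
    have hjlt : j + 1 < p.length := by
      by_contra hc
      have : p.drop (j + 1) = [] := List.drop_eq_nil_of_le (by omega)
      rw [this] at hb
      simp at hb
    have hb' : b = p[j + 1] := by
      rw [List.head?_eq_getElem?, List.getElem?_drop] at hb
      simp only [Nat.add_zero, List.getElem?_eq_getElem hjlt, Option.some.injEq] at hb
      exact (Option.some_injective _ hb).symm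
    have := List.isChain_iff_getElem.1 hchain j (by omega)
    rw [ha', hb', heq]
    exact this
  · simp only [List.length_append, htake_len, hdrop_len]; omega

private lemma dipath_short {V : Type*} [Fintype V] {E : V → V → Prop} {x y : V} :
    ∀ n (q : List V), q.length ≤ n → IsDipath E x y q →
      ∃ r, IsDipath E x y r ∧ r.length ≤ q.length ∧ r.length ≤ Fintype.card V + 1 := by
  intro n
  induction n with
  | zero => intro q hq hdq; exact absurd hdq.1 (by omega)
  | succ n ih =>
    intro q hq hdq
    by_cases hcard : q.length ≤ Fintype.card V + 1
    · exact ⟨q, hdq, le_refl _, hcard⟩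
    · push_neg at hcard
      have hndup : ¬ q.tail.Nodup := by
        intro h
        have := h.length_le_card
        simp [List.length_tail] at this
        omega
      have hninj : ¬ Function.Injective fun k : Fin q.tail.length =>
          q.tail[(k : ℕ)] := fun h => hndup (List.nodup_iff_injective_getElem.2 h)
      obtain ⟨a, b, hab, hne⟩ := Function.not_injective_iff.1 hninj
      have key : ∀ (a b : Fin q.tail.length), a < b →
          q.tail[(a : ℕ)] = q.tail[(b : ℕ)] →
          ∃ r, IsDipath E x y r ∧ r.length ≤ q.length ∧
            r.length ≤ Fintype.card V + 1 := by
        intro a b hlt habeq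
        have hta : ((a : ℕ) + 1) < q.length := by
          have := b.2; simp [List.length_tail] at this ⊢; omega
        have htb : ((b : ℕ) + 1) < q.length := by
          have := b.2; simp [List.length_tail] at this ⊢; omega
        have hea : q.tail[(a : ℕ)] = q[(a : ℕ) + 1]'hta := List.getElem_tail ..
        have heb : q.tail[(b : ℕ)] = q[(b : ℕ) + 1]'htb := List.getElem_tail ..
        have heq2 : q[(a : ℕ) + 1]'hta = q[(b : ℕ) + 1]'htb := by
          rw [← hea, ← heb, habeq]
        obtain ⟨r', hr', hlt'⟩ := dipath_cut hdq (Nat.le_add_left 1 _)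
          (by omega) htb heq2
        obtain ⟨r, hr, hle, hc⟩ := ih r' (by omega) hr'
        exact ⟨r, hr, by omega, hc⟩
      rcases lt_or_gt_of_ne hne with h | h
      · exact key a b h hab
      · exact key b a h hab.symm

/-- There exists `ε₀ ≥ 0` such that for all `ε ≥ ε₀` and all nodes `x, y` joined by a
directed path in `G`, every directed path from `x` to `y` minimizing the `ε`-total delay
has the minimum possible number of edges among all directed paths from `x` to `y` (for
paths given by their vertex lists, minimizing the number of edges is minimizing the list
length): as the per-node delay grows, minimum-delay paths are paths of minimum hop-count. -/
theorem min_eps_delay_paths_eventually_min_hop {V : Type*} [Fintype V]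
    (E : V → V → Prop) (δ : V → V → ℝ) (hδ : ∀ a b, E a b → 0 < δ a b) :
    ∃ ε₀ : ℝ, 0 ≤ ε₀ ∧ ∀ ε : ℝ, ε₀ ≤ ε → ∀ x y : V, (∃ p, IsDipath E x y p) →
      ∀ p, IsDipath E x y p →
        (∀ q, IsDipath E x y q → epsTotalDelay δ ε p ≤ epsTotalDelay δ ε q) →
        ∀ q, IsDipath E x y q → p.length ≤ q.length := by
  obtain ⟨B0, hB0⟩ := (Set.finite_range fun q : V × V => δ q.1 q.2).bddAbove
  set B : ℝ := max B0 0 with hBdef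
  have hB : ∀ a b : V, δ a b ≤ B := fun a b =>
    le_trans (hB0 (Set.mem_range_self (a, b))) (le_max_left _ _)
  have hBnn : 0 ≤ B := le_max_right _ _
  refine ⟨(Fintype.card V + 1) * B + 1, by positivity, ?_⟩
  intro ε hε x y _ p hp hmin q hq
  obtain ⟨r, hr, hrq, hrc⟩ := dipath_short q.length q (le_refl _) hq
  have hεnn : 0 ≤ ε := le_trans (by positivity) hε
  -- delays are nonnegative
  have hDp : 0 ≤ pathDelay δ p := by
    apply List.sum_nonneg
    intro z hz
    obtain ⟨w, hw, rfl⟩ := List.mem_map.1 hz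
    exact le_of_lt (hδ _ _ (isDipath_edges hp.2.2.2 w hw))
  -- delay of r is bounded
  have hDr : pathDelay δ r ≤ (Fintype.card V + 1) * B := by
    have h1 : pathDelay δ r ≤
        ((r.zip r.tail).map fun z => δ z.1 z.2).length • B := by
      apply List.sum_le_card_nsmul
      intro z hz
      obtain ⟨w, hw, rfl⟩ := List.mem_map.1 hz
      exact hB _ _
    have h2 : ((r.zip r.tail).map fun z => δ z.1 z.2).length ≤ Fintype.card V + 1 := by
      simp only [List.length_map, List.length_zip, List.length_tail]
      omega
    calc pathDelay δ r ≤ ((r.zip r.tail).map fun z => δ z.1 z.2).length • B := h1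
      _ = (((r.zip r.tail).map fun z => δ z.1 z.2).length : ℝ) * B := by
          rw [nsmul_eq_mul]
      _ ≤ (Fintype.card V + 1) * B := by
          apply mul_le_mul_of_nonneg_right _ hBnn
          exact_mod_cast h2
  -- suppose for contradiction r is shorter than p
  have hpr : p.length ≤ r.length := by
    by_contra hc
    push_neg at hc
    have hmr := hmin r hr
    unfold epsTotalDelay at hmr
    have hp2 : 2 ≤ p.length := hp.1
    have hr2 : 2 ≤ r.length := hr.1
    have hcp : ((p.length - 2 : ℕ) : ℝ) = (p.length : ℝ) - 2 := by
      rw [Nat.cast_sub hp2]; norm_num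
    have hcr : ((r.length - 2 : ℕ) : ℝ) = (r.length : ℝ) - 2 := by
      rw [Nat.cast_sub hr2]; norm_num
    rw [hcp, hcr] at hmr
    have hone : (1 : ℝ) ≤ (p.length : ℝ) - (r.length : ℝ) := by
      have : (r.length : ℝ) + 1 ≤ (p.length : ℝ) := by exact_mod_cast hc
      linarith
    nlinarith
  omega
end
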